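/- arXiv:2007.11728 — 3 statements merged into one kernel-verified Lean document; each statement's English description precedes it below -/
import Mathlib

section
/- Let λ : [0,L] → ℝ³ be continuous and suppose that for every continuous pair of functions g₁, g₂ : [0,L] → ℝ and every constant vector Ū ∈ ℝ³, the power ∫₀ᴸ (Ū + ∫₀^{s'} (g₁(s) n₁(s) + g₂(s) n₂(s)) ds) · λ(s') ds' vanishes, where (τ(s), n₁(s), n₂(s)) is a continuous right-handed orthonormal frame. Then ∫₀ᴸ λ(s') ds' = 0 and for every s ∈ [0,L], the vector ∫ₛᴸ λ(s') ds' is parallel to τ(s), i.e., (∫ₛᴸ λ ds')·n₁(s) = (∫ₛᴸ λ ds')·n₂(s) = 0. -/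
open Matrix MeasureTheory

def cross3 (u v : Fin 3 → ℝ) : Fin 3 → ℝ :=
  ![u 1 * v 2 - u 2 * v 1, u 2 * v 0 - u 0 * v 2, u 0 * v 1 - u 1 * v 0]

private lemma eval_ii {f : ℝ → Fin 3 → ℝ} {a b : ℝ}
    (hf : IntervalIntegrable f volume a b) (i : Fin 3) :
    (∫ x in a..b, f x) i = ∫ x in a..b, f x i :=
  ((ContinuousLinearMap.proj (R := ℝ) (φ := fun _ : Fin 3 => ℝ) i).intervalIntegral_comp_comm
    hf).symm

private lemma contOn_dot {f g : ℝ → Fin 3 → ℝ} {s : Set ℝ} (hf : ContinuousOn f s)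
    (hg : ContinuousOn g s) : ContinuousOn (fun x => f x ⬝ᵥ g x) s := by
  simp only [dotProduct]
  exact continuousOn_finset_sum _ fun i _ =>
    ((continuous_apply i).comp_continuousOn hf).mul ((continuous_apply i).comp_continuousOn hg)

/-- if the constraint force `λ` performs no work on any inextensible
motion (any `Ū`, `g₁`, `g₂`), then `∫₀ᴸ λ = 0` and `∫ₛᴸ λ` is orthogonal to `n₁(s)`
and `n₂(s)`, i.e. parallel to `τ(s)`. -/
theorem stmt_4 (L : ℝ) (hL : 0 < L)
    (lam τ n₁ n₂ : ℝ → Fin 3 → ℝ)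
    (hlam : ContinuousOn lam (Set.Icc 0 L))
    (hτc : ContinuousOn τ (Set.Icc 0 L))
    (hn₁c : ContinuousOn n₁ (Set.Icc 0 L))
    (hn₂c : ContinuousOn n₂ (Set.Icc 0 L))
    (hunit : ∀ s ∈ Set.Icc (0:ℝ) L,
      (τ s) ⬝ᵥ (τ s) = 1 ∧ (n₁ s) ⬝ᵥ (n₁ s) = 1 ∧ (n₂ s) ⬝ᵥ (n₂ s) = 1)
    (horth : ∀ s ∈ Set.Icc (0:ℝ) L,
      (τ s) ⬝ᵥ (n₁ s) = 0 ∧ (τ s) ⬝ᵥ (n₂ s) = 0 ∧ (n₁ s) ⬝ᵥ (n₂ s) = 0)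
    (hframe : ∀ s ∈ Set.Icc (0:ℝ) L, cross3 (τ s) (n₁ s) = n₂ s)
    (hpower : ∀ g₁ g₂ : ℝ → ℝ, Continuous g₁ → Continuous g₂ → ∀ U : Fin 3 → ℝ,
      (∫ s' in (0:ℝ)..L,
        (U + ∫ s in (0:ℝ)..s', (g₁ s • n₁ s + g₂ s • n₂ s)) ⬝ᵥ (lam s')) = 0) :
    (∫ s' in (0:ℝ)..L, lam s') = 0 ∧
    ∀ s ∈ Set.Icc (0:ℝ) L,
      (∫ s' in s..L, lam s') ⬝ᵥ (n₁ s) = 0 ∧ (∫ s' in s..L, lam s') ⬝ᵥ (n₂ s) = 0 := by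
  have hL' : (0:ℝ) ≤ L := hL.le
  have hIcc : Set.uIcc (0:ℝ) L = Set.Icc 0 L := Set.uIcc_of_le hL'
  have hmem0 : (0:ℝ) ∈ Set.Icc (0:ℝ) L := ⟨le_rfl, hL'⟩
  have hmemL : L ∈ Set.Icc (0:ℝ) L := ⟨hL', le_rfl⟩
  have hlamInt : ∀ a b, a ∈ Set.Icc (0:ℝ) L → b ∈ Set.Icc (0:ℝ) L →
      IntervalIntegrable lam volume a b := fun a b ha hb =>
    (hlam.mono (Set.uIcc_subset_Icc ha hb)).intervalIntegrable
  -- part 1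
  have h1 : ∀ U : Fin 3 → ℝ, (∫ s' in (0:ℝ)..L, U ⬝ᵥ lam s') = 0 := by
    intro U
    have := hpower (fun _ => 0) (fun _ => 0) continuous_const continuous_const U
    simpa using this
  have part1 : (∫ s' in (0:ℝ)..L, lam s') = 0 := by
    funext i
    rw [eval_ii (hlamInt 0 L hmem0 hmemL) i]
    have := h1 (Pi.single i 1)
    simp only [single_dotProduct, one_mul] at this
    simpa using this
  refine ⟨part1, ?_⟩
  -- part 2 setup
  set Λ : ℝ → Fin 3 → ℝ := fun s => ∫ t in s..L, lam t with hΛdef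
  have hΛc : ContinuousOn Λ (Set.Icc 0 L) := by
    have := intervalIntegral.continuousOn_primitive_interval_left (f := lam) (μ := volume)
      (a := 0) (b := L) (by rw [hIcc]; exact hlam.integrableOn_Icc)
    rwa [hIcc] at this
  set F : ℝ → ℝ := fun s => Λ s ⬝ᵥ n₁ s with hFdef
  set G : ℝ → ℝ := fun s => Λ s ⬝ᵥ n₂ s with hGdef
  have hFc : ContinuousOn F (Set.Icc 0 L) := contOn_dot hΛc hn₁c
  have hGc : ContinuousOn G (Set.Icc 0 L) := contOn_dot hΛc hn₂c
  -- clamp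
  set c : ℝ → ℝ := fun x => max 0 (min x L) with hcdef
  have hc : Continuous c := continuous_const.max (continuous_id.min continuous_const)
  have hcmem : ∀ x, c x ∈ Set.Icc 0 L :=
    fun x => ⟨le_max_left _ _, max_le hL' (min_le_right _ _)⟩
  have hceq : ∀ x ∈ Set.Icc (0:ℝ) L, c x = x := by
    intro x hx
    simp only [hcdef, min_eq_left hx.2, max_eq_right hx.1]
  set g₁ : ℝ → ℝ := fun x => F (c x) with hg₁def
  set g₂ : ℝ → ℝ := fun x => G (c x) with hg₂def
  have hg₁ : Continuous g₁ := hFc.comp_continuous hc hcmem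
  have hg₂ : Continuous g₂ := hGc.comp_continuous hc hcmem
  set h : ℝ → Fin 3 → ℝ := fun s => g₁ s • n₁ s + g₂ s • n₂ s with hhdef
  have hhc : ContinuousOn h (Set.Icc 0 L) :=
    (hg₁.continuousOn.smul hn₁c).add (hg₂.continuousOn.smul hn₂c)
  have hhInt : ∀ a b, a ∈ Set.Icc (0:ℝ) L → b ∈ Set.Icc (0:ℝ) L →
      IntervalIntegrable h volume a b := fun a b ha hb =>
    (hhc.mono (Set.uIcc_subset_Icc ha hb)).intervalIntegrable
  -- per-component continuity / integrability
  have hhic : ∀ i : Fin 3, ContinuousOn (fun s => h s i) (Set.Icc 0 L) :=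
    fun i => (continuous_apply i).comp_continuousOn hhc
  have hlic : ∀ i : Fin 3, ContinuousOn (fun s => lam s i) (Set.Icc 0 L) :=
    fun i => (continuous_apply i).comp_continuousOn hlam
  have hhiInt : ∀ (i : Fin 3) a b, a ∈ Set.Icc (0:ℝ) L → b ∈ Set.Icc (0:ℝ) L →
      IntervalIntegrable (fun s => h s i) volume a b := fun i a b ha hb =>
    ((hhic i).mono (Set.uIcc_subset_Icc ha hb)).intervalIntegrable
  have hliInt : ∀ (i : Fin 3) a b, a ∈ Set.Icc (0:ℝ) L → b ∈ Set.Icc (0:ℝ) L →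
      IntervalIntegrable (fun s => lam s i) volume a b := fun i a b ha hb =>
    ((hlic i).mono (Set.uIcc_subset_Icc ha hb)).intervalIntegrable
  -- u i and v i : primitives
  set u : Fin 3 → ℝ → ℝ := fun i s' => ∫ s in (0:ℝ)..s', h s i with hudef
  set v : Fin 3 → ℝ → ℝ := fun i s => ∫ t in s..L, lam t i with hvdef
  have hvΛ : ∀ i : Fin 3, ∀ s ∈ Set.Icc (0:ℝ) L, Λ s i = v i s := by
    intro i s hs
    exact eval_ii (hlamInt s L hs hmemL) i
  have huc : ∀ i : Fin 3, ContinuousOn (u i) (Set.Icc 0 L) := by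
    intro i
    have := intervalIntegral.continuousOn_primitive_interval (f := fun s => h s i)
      (μ := volume) (a := 0) (b := L) (by rw [hIcc]; exact (hhic i).integrableOn_Icc)
    rwa [hIcc] at this
  have hvc : ∀ i : Fin 3, ContinuousOn (v i) (Set.Icc 0 L) := by
    intro i
    have := intervalIntegral.continuousOn_primitive_interval_left (f := fun s => lam s i)
      (μ := volume) (a := 0) (b := L) (by rw [hIcc]; exact (hlic i).integrableOn_Icc)
    rwa [hIcc] at this
  -- integration by parts, per component
  have comp : ∀ i : Fin 3,
      (∫ s' in (0:ℝ)..L, u i s' * lam s' i) = ∫ s in (0:ℝ)..L, h s i * v i s := by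
    intro i
    have hder : ∀ x ∈ Set.Ioo (0:ℝ) L,
        HasDerivAt (fun s => u i s * v i s) (h x i * v i x - u i x * lam x i) x := by
      intro x hx
      have hxmem : x ∈ Set.Icc (0:ℝ) L := Set.Ioo_subset_Icc_self hx
      have hxnhds : Set.Icc (0:ℝ) L ∈ nhds x := Icc_mem_nhds hx.1 hx.2
      have hhiCA : ContinuousAt (fun s => h s i) x := (hhic i).continuousAt hxnhds
      have hliCA : ContinuousAt (fun s => lam s i) x := (hlic i).continuousAt hxnhds
      have hmes_h : StronglyMeasurableAtFilter (fun s => h s i) (nhds x) volume :=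
        ContinuousOn.stronglyMeasurableAtFilter isOpen_Ioo
          ((hhic i).mono Set.Ioo_subset_Icc_self) x hx
      have hmes_l : StronglyMeasurableAtFilter (fun s => lam s i) (nhds x) volume :=
        ContinuousOn.stronglyMeasurableAtFilter isOpen_Ioo
          ((hlic i).mono Set.Ioo_subset_Icc_self) x hx
      have hu : HasDerivAt (u i) (h x i) x :=
        intervalIntegral.integral_hasDerivAt_right (hhiInt i 0 x hmem0 hxmem) hmes_h hhiCA
      have hv0 : HasDerivAt (fun s' => ∫ t in L..s', lam t i) (lam x i) x :=
        intervalIntegral.integral_hasDerivAt_right (hliInt i L x hmemL hxmem) hmes_l hliCA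
      have hv : HasDerivAt (v i) (-(lam x i)) x := by
        have heq : v i = fun s' => -∫ t in L..s', lam t i := by
          funext s'
          exact intervalIntegral.integral_symm L s'
        rw [heq]
        exact hv0.neg
      have := hu.mul hv
      rw [show h x i * v i x - u i x * lam x i = h x i * v i x + u i x * -lam x i by ring]
      exact this
    have hprod1 : IntervalIntegrable (fun s => h s i * v i s) volume 0 L := by
      apply ContinuousOn.intervalIntegrable
      rw [hIcc]
      exact (hhic i).mul (hvc i)
    have hprod2 : IntervalIntegrable (fun s => u i s * lam s i) volume 0 L := by
      apply ContinuousOn.intervalIntegrable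
      rw [hIcc]
      exact (huc i).mul (hlic i)
    have hIBP := intervalIntegral.integral_eq_sub_of_hasDeriv_right_of_le hL'
      ((huc i).mul (hvc i)) (fun x hx => (hder x hx).hasDerivWithinAt)
      (hprod1.sub hprod2)
    have hu0 : u i 0 = 0 := intervalIntegral.integral_same
    have hvL : v i L = 0 := intervalIntegral.integral_same
    rw [intervalIntegral.integral_sub hprod1 hprod2, Pi.mul_apply, Pi.mul_apply, hu0, hvL] at hIBP
    simp only [mul_zero, zero_mul, sub_zero] at hIBP
    linarith [hIBP]
  -- main identity from hpower
  have key := hpower g₁ g₂ hg₁ hg₂ 0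
  simp only [zero_add] at key
  have e1 : Set.EqOn (fun s' => (∫ s in (0:ℝ)..s', h s) ⬝ᵥ lam s')
      (fun s' => ∑ i : Fin 3, u i s' * lam s' i) (Set.uIcc 0 L) := by
    intro s' hs'
    rw [hIcc] at hs'
    simp only [dotProduct]
    refine Finset.sum_congr rfl fun i _ => ?_
    rw [eval_ii (hhInt 0 s' hmem0 hs') i]
  rw [intervalIntegral.integral_congr e1] at key
  rw [intervalIntegral.integral_finset_sum (fun i _ => by
    apply ContinuousOn.intervalIntegrable
    rw [hIcc]
    exact (huc i).mul (hlic i))] at key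
  have key2 : (∫ s in (0:ℝ)..L, h s ⬝ᵥ Λ s) = 0 := by
    have e3 : Set.EqOn (fun s => h s ⬝ᵥ Λ s)
        (fun s => ∑ i : Fin 3, h s i * v i s) (Set.uIcc 0 L) := by
      intro s hs
      rw [hIcc] at hs
      simp only [dotProduct]
      refine Finset.sum_congr rfl fun i _ => ?_
      rw [hvΛ i s hs]
    rw [intervalIntegral.integral_congr e3,
      intervalIntegral.integral_finset_sum (fun i _ => by
        apply ContinuousOn.intervalIntegrable
        rw [hIcc]
        exact (hhic i).mul (hvc i))]
    refine Eq.trans ?_ key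
    exact Finset.sum_congr rfl fun i _ => (comp i).symm
  -- rewrite the integrand as F² + G²
  have e4 : Set.EqOn (fun s => h s ⬝ᵥ Λ s) (fun s => F s ^ 2 + G s ^ 2) (Set.uIcc 0 L) := by
    intro s hs
    rw [hIcc] at hs
    have hcs : c s = s := hceq s hs
    simp only [hhdef, hg₁def, hg₂def, hcs, add_dotProduct, smul_dotProduct,
      smul_eq_mul]
    rw [dotProduct_comm (n₁ s) (Λ s), dotProduct_comm (n₂ s) (Λ s)]
    ring
  have keyQ : (∫ s in (0:ℝ)..L, F s ^ 2 + G s ^ 2) = 0 := by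
    rw [← intervalIntegral.integral_congr e4]
    exact key2
  have hQc : ContinuousOn (fun s => F s ^ 2 + G s ^ 2) (Set.Icc 0 L) :=
    ((hFc.pow 2).add (hGc.pow 2))
  -- pointwise vanishing
  intro s hs
  have hzero : F s ^ 2 + G s ^ 2 = 0 := by
    by_contra h0
    have hpos : 0 < F s ^ 2 + G s ^ 2 :=
      lt_of_le_of_ne (by positivity) (Ne.symm h0)
    have := intervalIntegral.integral_pos hL hQc
      (fun x _ => by positivity) ⟨s, hs, hpos⟩
    rw [keyQ] at this
    exact lt_irrefl 0 this
  have hF0 : F s = 0 := by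
    have := (add_eq_zero_iff_of_nonneg (sq_nonneg (F s)) (sq_nonneg (G s))).mp hzero
    exact pow_eq_zero_iff (by norm_num) |>.mp this.1
  have hG0 : G s = 0 := by
    have := (add_eq_zero_iff_of_nonneg (sq_nonneg (F s)) (sq_nonneg (G s))).mp hzero
    exact pow_eq_zero_iff (by norm_num) |>.mp this.2
  exact ⟨hF0, hG0⟩
end

section
/- The cross-linker force densities f^{CL,i}_p and f^{CL,j}_q defined by the symmetric Gaussian-smoothed spring formula exert zero net force and zero net torque: Σ_p f^{CL,i}_p w_p + Σ_q f^{CL,j}_q w_q = 0 and Σ_p (X^i_p × f^{CL,i}_p) w_p + Σ_q (X^j_q × f^{CL,j}_q) w_q = 0, for any choice of the smoothing weights δ_h and quadrature weights w. -/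
open Matrix Finset

lemma cross3_add_right (u v w : Fin 3 → ℝ) : cross3 u (v + w) = cross3 u v + cross3 u w := by
  funext k; fin_cases k <;> simp [cross3] <;> ring

lemma cross3_smul_right (c : ℝ) (u v : Fin 3 → ℝ) : cross3 u (c • v) = c • cross3 u v := by
  funext k; fin_cases k <;> simp [cross3] <;> ring

def crossL (u : Fin 3 → ℝ) : (Fin 3 → ℝ) →ₗ[ℝ] (Fin 3 → ℝ) where
  toFun := cross3 u
  map_add' := cross3_add_right u
  map_smul' := fun c v => cross3_smul_right c u v

lemma cross3_sum {ι : Type*} (u : Fin 3 → ℝ) (s : Finset ι) (f : ι → Fin 3 → ℝ) :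
    cross3 u (∑ q ∈ s, f q) = ∑ q ∈ s, cross3 u (f q) :=
  map_sum (crossL u) f s

lemma cross3_pair (u v : Fin 3 → ℝ) : cross3 u (u - v) + cross3 v (v - u) = 0 := by
  funext k; fin_cases k <;> simp [cross3] <;> ring

/-- the Gaussian-smoothed cross-linker force densities exert zero net
force and zero net torque on the pair of fibers they connect, for any smoothing
weights and quadrature weights. -/
theorem stmt_15 (N : ℕ) (Xi Xj : Fin N → Fin 3 → ℝ) (w a b : Fin N → ℝ)
    (hw : ∀ p, 0 < w p)
    (hna : ∑ p, a p * w p = 1) (hnb : ∑ q, b q * w q = 1)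
    (C : ℝ) (fi fj : Fin N → Fin 3 → ℝ)
    (hfi : ∀ p, fi p = (C * a p) • ∑ q, (b q * w q) • (Xi p - Xj q))
    (hfj : ∀ q, fj q = (C * b q) • ∑ p, (a p * w p) • (Xj q - Xi p)) :
    ((∑ p, w p • fi p) + (∑ q, w q • fj q) = 0) ∧
    ((∑ p, w p • cross3 (Xi p) (fi p)) + (∑ q, w q • cross3 (Xj q) (fj q)) = 0) := by
  constructor
  · simp only [hfi, hfj, Finset.smul_sum, smul_smul]
    rw [Finset.sum_comm (s := Finset.univ) (t := Finset.univ)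
      (f := fun q p => (w q * (C * b q * (a p * w p))) • (Xj q - Xi p)),
      ← Finset.sum_add_distrib]
    refine Finset.sum_eq_zero fun p _ => ?_
    rw [← Finset.sum_add_distrib]
    refine Finset.sum_eq_zero fun q _ => ?_
    have h : w q * (C * b q * (a p * w p)) = w p * (C * a p * (b q * w q)) := by ring
    rw [h, ← smul_add]
    simp
  · simp only [hfi, hfj, cross3_smul_right, cross3_sum, Finset.smul_sum, smul_smul]
    rw [Finset.sum_comm (s := Finset.univ) (t := Finset.univ)
      (f := fun q p => (w q * (C * b q * (a p * w p))) • cross3 (Xj q) (Xj q - Xi p)),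
      ← Finset.sum_add_distrib]
    refine Finset.sum_eq_zero fun p _ => ?_
    rw [← Finset.sum_add_distrib]
    refine Finset.sum_eq_zero fun q _ => ?_
    have h : w q * (C * b q * (a p * w p)) = w p * (C * a p * (b q * w q)) := by ring
    rw [h, ← smul_add, cross3_pair, smul_zero]
end

section
/- The function g(s,s') = [(I + R̂R̂)·|s'−s|/‖R‖ · f(s') − (I + ττ) f(s)]/(s'−s), with R = X(s)−X(s'), arising in the finite part integral of slender body theory, has the limit as s' → s: (1/2)(τ(s) X_{ss}(s)ᵀ + X_{ss}(s) τ(s)ᵀ) f(s) + (I + τ(s)τ(s)ᵀ) f_s(s), assuming X is C² with ‖X_s‖ ≡ 1 and f is C¹. -/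
open Matrix Filter Topology

noncomputable def norm3 (u : Fin 3 → ℝ) : ℝ := Real.sqrt (u ⬝ᵥ u)

lemma deriv_contDiff_one {g : ℝ → ℝ} (hg : ContDiff ℝ 2 g) : ContDiff ℝ 1 (deriv g) := by
  have : ContDiff ℝ (1 + 1) g := by exact_mod_cast hg
  exact (contDiff_succ_iff_deriv.mp this).2.2

-- second-order Taylor limit for real functions, via L'Hôpital
lemma taylor2 (g : ℝ → ℝ) (hg : ContDiff ℝ 2 g) (x : ℝ) :
    Tendsto (fun y => (g y - g x - (y - x) * deriv g x) / (y - x)^2) (𝓝[≠] x)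
      (𝓝 (deriv (deriv g) x / 2)) := by
  have hd1 : Differentiable ℝ g := hg.differentiable (by norm_num)
  have hdg : Differentiable ℝ (deriv g) := (deriv_contDiff_one hg).differentiable one_ne_zero
  have hdiv : Tendsto (fun y => (deriv g y - deriv g x) / (2 * (y - x))) (𝓝[≠] x)
      (𝓝 (deriv (deriv g) x / 2)) := by
    have hs : Tendsto (slope (deriv g) x) (𝓝[≠] x) (𝓝 (deriv (deriv g) x)) :=
      hasDerivAt_iff_tendsto_slope.mp (hdg x).hasDerivAt
    refine (hs.div_const 2).congr (fun y => ?_)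
    simp [slope_def_field, div_div]
    ring
  have H := HasDerivAt.lhopital_zero_nhdsNE
    (f := fun y => g y - g x - (y - x) * deriv g x) (f' := fun y => deriv g y - deriv g x)
    (g := fun y => (y - x)^2) (g' := fun y => 2 * (y - x))
    (a := x) (l := 𝓝 (deriv (deriv g) x / 2)) ?_ ?_ ?_ ?_ ?_ ?_
  · exact H
  · filter_upwards with y
    have h1 : HasDerivAt (fun y => g y - g x - (y - x) * deriv g x)
        (deriv g y - (1 * deriv g x)) y :=
      (((hd1 y).hasDerivAt.sub_const _).sub (((hasDerivAt_id y).sub_const x).mul_const _))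
    simpa using h1
  · filter_upwards with y
    have : HasDerivAt (fun y => (y - x)^2) (2 * (y - x)^1 * 1) y := by
      simpa using HasDerivAt.fun_pow ((hasDerivAt_id y).sub_const x) 2
    simpa using this
  · filter_upwards [self_mem_nhdsWithin] with y hy
    simp only [Set.mem_compl_iff, Set.mem_singleton_iff] at hy
    exact mul_ne_zero two_ne_zero (sub_ne_zero.mpr hy)
  · have : ContinuousAt (fun y => g y - g x - (y - x) * deriv g x) x :=
      ((hd1 x).continuousAt.sub continuousAt_const).sub
        ((continuousAt_id.sub continuousAt_const).mul continuousAt_const)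
    have h0 := this.tendsto
    simp only [sub_self, zero_mul] at h0
    simpa using tendsto_nhdsWithin_of_tendsto_nhds h0
  · have : ContinuousAt (fun y => (y - x)^2) x :=
      (continuousAt_id.sub continuousAt_const).pow 2
    have h0 := this.tendsto
    simp only [sub_self] at h0
    simpa using tendsto_nhdsWithin_of_tendsto_nhds h0
  · exact hdiv

lemma hasDerivAt_dot {u v : ℝ → Fin 3 → ℝ} {u' v' : Fin 3 → ℝ} {x : ℝ}
    (hu : HasDerivAt u u' x) (hv : HasDerivAt v v' x) :
    HasDerivAt (fun t => u t ⬝ᵥ v t) (u' ⬝ᵥ v x + u x ⬝ᵥ v') x := by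
  simp only [dotProduct]
  rw [← Finset.sum_add_distrib]
  exact HasDerivAt.fun_sum fun i _ => by
    simpa [mul_comm] using (hasDerivAt_pi.mp hu i).fun_mul (hasDerivAt_pi.mp hv i)

-- the averaged-slope function V is differentiable at s with derivative X''(s)/2
lemma hasDerivAt_V (X : ℝ → Fin 3 → ℝ) (hX : ContDiff ℝ 2 X) (s : ℝ) :
    HasDerivAt (fun y => if y = s then deriv X s else (y - s)⁻¹ • (X y - X s))
      ((2 : ℝ)⁻¹ • deriv (deriv X) s) s := by
  set V : ℝ → Fin 3 → ℝ := fun y => if y = s then deriv X s else (y - s)⁻¹ • (X y - X s) with hV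
  rw [hasDerivAt_iff_tendsto_slope]
  rw [tendsto_pi_nhds]
  intro i
  have hXi : ContDiff ℝ 2 (fun t => X t i) := contDiff_pi.mp hX i
  have hder1 : ∀ t, deriv (fun t => X t i) t = deriv X t i := by
    intro t
    exact (hasDerivAt_pi.mp ((hX.differentiable (by norm_num) t).hasDerivAt) i).deriv
  have hdX : Differentiable ℝ (deriv X) := by
    have : ContDiff ℝ (1 + 1) X := by exact_mod_cast hX
    exact ((contDiff_succ_iff_deriv.mp this).2.2).differentiable one_ne_zero
  have hder2 : deriv (deriv (fun t => X t i)) s = deriv (deriv X) s i := by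
    have he : deriv (fun t => X t i) = fun t => deriv X t i := funext hder1
    rw [he]
    exact (hasDerivAt_pi.mp ((hdX s).hasDerivAt) i).deriv
  have ht := taylor2 (fun t => X t i) hXi s
  rw [hder1, hder2] at ht
  have ht' : Tendsto (fun y => (X y i - X s i - (y - s) * deriv X s i) / (y - s) ^ 2)
      (𝓝[≠] s) (𝓝 (((2 : ℝ)⁻¹ • deriv (deriv X) s) i)) := by
    simpa [div_eq_inv_mul] using ht
  refine Tendsto.congr' ?_ ht'
  filter_upwards [self_mem_nhdsWithin] with y hy
  simp only [Set.mem_compl_iff, Set.mem_singleton_iff] at hy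
  have hys : y - s ≠ 0 := sub_ne_zero.mpr hy
  simp only [slope, vsub_eq_sub, hV, if_neg hy, if_pos rfl]
  simp only [Pi.smul_apply, Pi.sub_apply, smul_eq_mul]
  field_simp

/-- the finite-part integrand
`g(s,s') = [(I + R̂R̂ᵀ)(|s'−s|/‖R‖) f(s') − (I + ττᵀ) f(s)]/(s'−s)`, with
`R = X(s) − X(s')`, tends as `s' → s` to
`(1/2)((X_ss·f)τ + (τ·f)X_ss) + f_s + (τ·f_s)τ` for a C² unit-speed `X` and C¹ `f`. -/
theorem stmt_17 (X f : ℝ → Fin 3 → ℝ)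
    (hX : ContDiff ℝ 2 X) (hf : ContDiff ℝ 1 f)
    (hunit : ∀ u, norm3 (deriv X u) = 1)
    (s : ℝ) (g : ℝ → Fin 3 → ℝ)
    (hg : ∀ s', g s' = (s' - s)⁻¹ •
      ((|s' - s| / norm3 (X s - X s')) •
          (f s' + ((((norm3 (X s - X s'))⁻¹ • (X s - X s')) ⬝ᵥ f s') •
            ((norm3 (X s - X s'))⁻¹ • (X s - X s')))) -
        (f s + ((deriv X s) ⬝ᵥ f s) • deriv X s))) :
    Tendsto g (nhdsWithin s {s}ᶜ)
      (nhds ((1 / 2 : ℝ) • (((deriv (deriv X) s) ⬝ᵥ f s) • deriv X s +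
          ((deriv X s) ⬝ᵥ f s) • deriv (deriv X) s) +
        (deriv f s + ((deriv X s) ⬝ᵥ deriv f s) • deriv X s))) := by
  classical
  set τ := deriv X s with hτ
  set D := deriv (deriv X) s with hD
  set V : ℝ → Fin 3 → ℝ := fun y => if y = s then deriv X s else (y - s)⁻¹ • (X y - X s)
    with hVdef
  have hV : HasDerivAt V ((2 : ℝ)⁻¹ • D) s := hasDerivAt_V X hX s
  have hVs : V s = τ := by simp [hVdef, hτ]
  -- unit speed: the dot product of deriv X with itself is 1
  have hdot1 : ∀ u, deriv X u ⬝ᵥ deriv X u = 1 := by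
    intro u
    have h0 : 0 ≤ deriv X u ⬝ᵥ deriv X u :=
      Finset.sum_nonneg fun i _ => mul_self_nonneg _
    have h1 := hunit u
    unfold norm3 at h1
    nlinarith [Real.sq_sqrt h0]
  have hdX : Differentiable ℝ (deriv X) := by
    have h2 : ContDiff ℝ (1 + 1) X := by exact_mod_cast hX
    exact ((contDiff_succ_iff_deriv.mp h2).2.2).differentiable one_ne_zero
  -- τ ⬝ᵥ D = 0
  have hconst : HasDerivAt (fun u => deriv X u ⬝ᵥ deriv X u) (D ⬝ᵥ τ + τ ⬝ᵥ D) s :=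
    hasDerivAt_dot (hdX s).hasDerivAt (hdX s).hasDerivAt
  have hzero : D ⬝ᵥ τ + τ ⬝ᵥ D = 0 := by
    have he : (fun u => deriv X u ⬝ᵥ deriv X u) = fun _ => (1 : ℝ) := funext hdot1
    rw [he] at hconst
    exact hconst.unique (hasDerivAt_const s 1)
  have hτD : τ ⬝ᵥ D = 0 := by
    rw [dotProduct_comm] at hzero; linarith
  have hDτ : D ⬝ᵥ τ = 0 := by rw [dotProduct_comm]; exact hτD
  have hfd : HasDerivAt f (deriv f s) s := (hf.differentiable one_ne_zero s).hasDerivAt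
  -- p = V ⬝ᵥ V
  have hps : V s ⬝ᵥ V s = 1 := by rw [hVs]; exact hdot1 s
  have hp : HasDerivAt (fun t => V t ⬝ᵥ V t) 0 s := by
    have h := hasDerivAt_dot hV hV
    rw [hVs] at h
    rw [smul_dotProduct, dotProduct_smul, hDτ, hτD] at h
    simpa using h
  have hq : HasDerivAt (fun t => Real.sqrt (V t ⬝ᵥ V t)) 0 s := by
    have h := (Real.hasDerivAt_sqrt (x := V s ⬝ᵥ V s) (by rw [hps]; norm_num)).comp s hp
    simpa [Function.comp_def] using h
  have hqs : Real.sqrt (V s ⬝ᵥ V s) = 1 := by rw [hps]; exact Real.sqrt_one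
  have hqinv : HasDerivAt (fun t => (Real.sqrt (V t ⬝ᵥ V t))⁻¹) 0 s := by
    have h := hq.fun_inv (by rw [hqs]; norm_num)
    simpa [hqs] using h
  -- the scalar c = (V ⬝ᵥ f) / (V ⬝ᵥ V)
  have hc : HasDerivAt (fun t => (V t ⬝ᵥ f t) / (V t ⬝ᵥ V t))
      (2⁻¹ * (D ⬝ᵥ f s) + τ ⬝ᵥ deriv f s) s := by
    have hnum := hasDerivAt_dot hV hfd
    have h := hnum.fun_div hp (by rw [hps]; norm_num)
    rw [hps, hVs] at h
    rw [smul_dotProduct] at h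
    simpa using h
  -- A and its derivative
  set A : ℝ → Fin 3 → ℝ := fun t =>
    (Real.sqrt (V t ⬝ᵥ V t))⁻¹ • (f t + ((V t ⬝ᵥ f t) / (V t ⬝ᵥ V t)) • V t) with hAdef
  set L : Fin 3 → ℝ := (1 / 2 : ℝ) • ((D ⬝ᵥ f s) • τ + (τ ⬝ᵥ f s) • D) +
      (deriv f s + (τ ⬝ᵥ deriv f s) • τ) with hL
  have hA : HasDerivAt A L s := by
    have h2 := hc.fun_smul hV
    have h3 := hfd.fun_add h2
    have h4 := hqinv.fun_smul h3
    rw [hqs] at h4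
    rw [hVs] at h4
    have hττ : τ ⬝ᵥ τ = (1 : ℝ) := hdot1 s
    rw [hττ] at h4
    refine h4.congr_deriv ?_
    rw [hL]
    simp only [one_smul, zero_smul, add_zero, zero_add, div_one, smul_smul]
    module
  -- eventual equality of g with slope A s
  have hpos : ∀ᶠ y in 𝓝 s, 0 < V y ⬝ᵥ V y := by
    have hcont : ContinuousAt (fun t => V t ⬝ᵥ V t) s := hp.continuousAt
    have : ∀ᶠ r in 𝓝 (V s ⬝ᵥ V s), 0 < r := by
      rw [hps]; exact eventually_gt_nhds one_pos
    exact hcont.eventually this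
  have heq : slope A s =ᶠ[𝓝[≠] s] g := by
    filter_upwards [nhdsWithin_le_nhds hpos, self_mem_nhdsWithin] with y hpy hy
    simp only [Set.mem_compl_iff, Set.mem_singleton_iff] at hy
    have hys : y - s ≠ 0 := sub_ne_zero.mpr hy
    have hVy : V y = (y - s)⁻¹ • (X y - X s) := if_neg hy
    have hXy : X s - X y = (-(y - s)) • V y := by
      rw [hVy, smul_smul]
      rw [show -(y - s) * (y - s)⁻¹ = -1 by field_simp]
      simp [neg_sub]
    set py := V y ⬝ᵥ V y with hpydef
    have hdotXX : (X s - X y) ⬝ᵥ (X s - X y) = (y - s)^2 * py := by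
      rw [hXy, smul_dotProduct, dotProduct_smul]
      simp only [smul_eq_mul, ← hpydef]
      ring
    have hnorm : norm3 (X s - X y) = |y - s| * Real.sqrt py := by
      unfold norm3
      rw [hdotXX, Real.sqrt_mul (sq_nonneg _), Real.sqrt_sq_eq_abs]
    have habs : |y - s| ≠ 0 := abs_ne_zero.mpr hys
    have hsq : Real.sqrt py ≠ 0 := ne_of_gt (Real.sqrt_pos.mpr hpy)
    have hfrac : |y - s| / norm3 (X s - X y) = (Real.sqrt py)⁻¹ := by
      rw [hnorm]; field_simp
    set c : ℝ := (|y - s| * Real.sqrt py)⁻¹ * (-(y - s)) with hcdef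
    have hRhat : (norm3 (X s - X y))⁻¹ • (X s - X y) = c • V y := by
      rw [hnorm, hXy, smul_smul]
    have hc2 : c * c = py⁻¹ := by
      rw [hcdef]
      have h1 : |y - s| * |y - s| = (y - s) * (y - s) := abs_mul_abs_self _
      have h2 : Real.sqrt py * Real.sqrt py = py :=
        Real.mul_self_sqrt (le_of_lt hpy)
      field_simp
      nlinarith [h1, h2]
    have hproj : (((norm3 (X s - X y))⁻¹ • (X s - X y)) ⬝ᵥ f y) •
        ((norm3 (X s - X y))⁻¹ • (X s - X y)) = ((V y ⬝ᵥ f y) / py) • V y := by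
      rw [hRhat, smul_dotProduct, smul_smul]
      simp only [smul_eq_mul]
      rw [show c * (V y ⬝ᵥ f y) * c = (c * c) * (V y ⬝ᵥ f y) by ring, hc2]
      rw [div_eq_inv_mul]
    have hAy : A y = (|y - s| / norm3 (X s - X y)) •
        (f y + ((((norm3 (X s - X y))⁻¹ • (X s - X y)) ⬝ᵥ f y) •
          ((norm3 (X s - X y))⁻¹ • (X s - X y)))) := by
      rw [hAdef, hfrac, hproj]
    have hAs : A s = f s + (τ ⬝ᵥ f s) • τ := by
      have hττ : τ ⬝ᵥ τ = (1 : ℝ) := hdot1 s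
      rw [hAdef]
      simp [hVs, hττ]
    rw [hg y, slope_def_module, hAy, hAs]
  exact Tendsto.congr' heq (hasDerivAt_iff_tendsto_slope.mp hA)
end
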